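/- Let E be a complex inner product space, let A B : E →L[ℂ] E be self-adjoint continuous linear operators, and let ψ ∈ E with ‖ψ‖ = 1. Write ⟨A⟩ = Re ⟪A ψ, ψ⟫ and σ_A² = ‖A ψ‖² − ⟨A⟩², and similarly for B. Then σ_A² · σ_B² ≥ (Re ⟪A ψ, B ψ⟫ − ⟨A⟩·⟨B⟩)² + (Im ⟪A ψ, B ψ⟫)². (Robertson–Schrödinger uncertainty relation: the variances of two self-adjoint observables in a pure state dominate the squared covariance plus the squared commutator expectation.) -/

import Mathlib

open scoped InnerProductSpace

private lemma my_inner_self_re {E : Type*} [NormedAddCommGroup E]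
    [InnerProductSpace ℂ E] (x : E) : (⟪x, x⟫_ℂ).re = ‖x‖ ^ 2 := by
  rw [← inner_self_eq_norm_sq (𝕜 := ℂ)]
  rfl

/-- Robertson–Schrödinger uncertainty relation. -/
theorem stmt_1 {E : Type*} [NormedAddCommGroup E] [InnerProductSpace ℂ E]
    (A B : E →L[ℂ] E)
    (hA : ∀ x y : E, ⟪A x, y⟫_ℂ = ⟪x, A y⟫_ℂ)
    (hB : ∀ x y : E, ⟪B x, y⟫_ℂ = ⟪x, B y⟫_ℂ)
    (ψ : E) (hψ : ‖ψ‖ = 1) :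
    (‖A ψ‖ ^ 2 - (⟪A ψ, ψ⟫_ℂ).re ^ 2) * (‖B ψ‖ ^ 2 - (⟪B ψ, ψ⟫_ℂ).re ^ 2) ≥
      ((⟪A ψ, B ψ⟫_ℂ).re - (⟪A ψ, ψ⟫_ℂ).re * (⟪B ψ, ψ⟫_ℂ).re) ^ 2 +
        (⟪A ψ, B ψ⟫_ℂ).im ^ 2 := by
  have hψ2 : ⟪ψ, ψ⟫_ℂ = 1 := by
    rw [inner_self_eq_norm_sq_to_K, hψ]; norm_num
  set a : ℝ := (⟪A ψ, ψ⟫_ℂ).re with ha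
  set b : ℝ := (⟪B ψ, ψ⟫_ℂ).re with hb
  have hAr : ⟪A ψ, ψ⟫_ℂ = (a : ℂ) := by
    have h1 : ⟪A ψ, ψ⟫_ℂ = starRingEnd ℂ ⟪A ψ, ψ⟫_ℂ := by
      conv_lhs => rw [hA ψ ψ, ← inner_conj_symm]
    exact (Complex.conj_eq_iff_re.mp h1.symm).symm
  have hBr : ⟪B ψ, ψ⟫_ℂ = (b : ℂ) := by
    have h1 : ⟪B ψ, ψ⟫_ℂ = starRingEnd ℂ ⟪B ψ, ψ⟫_ℂ := by
      conv_lhs => rw [hB ψ ψ, ← inner_conj_symm]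
    exact (Complex.conj_eq_iff_re.mp h1.symm).symm
  have hAr' : ⟪ψ, A ψ⟫_ℂ = (a : ℂ) := by
    rw [← inner_conj_symm, hAr, Complex.conj_ofReal]
  have hBr' : ⟪ψ, B ψ⟫_ℂ = (b : ℂ) := by
    rw [← inner_conj_symm, hBr, Complex.conj_ofReal]
  set u : E := A ψ - (a : ℂ) • ψ with hu
  set v : E := B ψ - (b : ℂ) • ψ with hv
  have huv : ⟪u, v⟫_ℂ = ⟪A ψ, B ψ⟫_ℂ - (a : ℂ) * b := by
    simp only [hu, hv, inner_sub_left, inner_sub_right, inner_smul_left,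
      inner_smul_right, hψ2, hAr, hBr, hAr', hBr', Complex.conj_ofReal]
    ring
  have hnu : ‖u‖ ^ 2 = ‖A ψ‖ ^ 2 - a ^ 2 := by
    have h1 : ⟪u, u⟫_ℂ = ⟪A ψ, A ψ⟫_ℂ - (a : ℂ) * a := by
      simp only [hu, inner_sub_left, inner_sub_right, inner_smul_left,
        inner_smul_right, hψ2, hAr, hAr', Complex.conj_ofReal]
      ring
    have h2 := congrArg Complex.re h1
    rwa [my_inner_self_re, Complex.sub_re, my_inner_self_re,
      Complex.mul_re, Complex.ofReal_re, Complex.ofReal_im,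
      show (0:ℝ) * 0 = 0 by ring, sub_zero, ← sq] at h2
  have hnv : ‖v‖ ^ 2 = ‖B ψ‖ ^ 2 - b ^ 2 := by
    have h1 : ⟪v, v⟫_ℂ = ⟪B ψ, B ψ⟫_ℂ - (b : ℂ) * b := by
      simp only [hv, inner_sub_left, inner_sub_right, inner_smul_left,
        inner_smul_right, hψ2, hBr, hBr', Complex.conj_ofReal]
      ring
    have h2 := congrArg Complex.re h1
    rwa [my_inner_self_re, Complex.sub_re, my_inner_self_re,
      Complex.mul_re, Complex.ofReal_re, Complex.ofReal_im,
      show (0:ℝ) * 0 = 0 by ring, sub_zero, ← sq] at h2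
  have CS : ‖⟪u, v⟫_ℂ‖ ^ 2 ≤ ‖u‖ ^ 2 * ‖v‖ ^ 2 := by
    have := norm_inner_le_norm (𝕜 := ℂ) u v
    calc ‖⟪u, v⟫_ℂ‖ ^ 2 ≤ (‖u‖ * ‖v‖) ^ 2 := by
          apply pow_le_pow_left₀ (norm_nonneg _) this
      _ = ‖u‖ ^ 2 * ‖v‖ ^ 2 := by ring
  have hre : (⟪u, v⟫_ℂ).re = (⟪A ψ, B ψ⟫_ℂ).re - a * b := by
    rw [huv]; simp [Complex.sub_re, Complex.mul_re]
  have him : (⟪u, v⟫_ℂ).im = (⟪A ψ, B ψ⟫_ℂ).im := by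
    rw [huv]; simp [Complex.sub_im, Complex.mul_im]
  have hnormsq : ‖⟪u, v⟫_ℂ‖ ^ 2 =
      ((⟪A ψ, B ψ⟫_ℂ).re - a * b) ^ 2 + (⟪A ψ, B ψ⟫_ℂ).im ^ 2 := by
    rw [Complex.sq_norm, Complex.normSq_apply, hre, him]; ring
  rw [ge_iff_le, ← hnu, ← hnv, ← hnormsq]
  exact CS
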